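/- As formal power series over ℤ/2ℤ, Σ_{n≥0} (Σ_{r=0}^{n} sf(r,3)) q^n = Π_{n≥0} (1 + q^{2·3^n}). Equivalently, Σ_{r=0}^{n} sf(r,3) is odd if and only if n is a sum of distinct integers of the form 2·3^k. -/

import Mathlib

/-- The semi-`m`-Fibonacci numbers: `sfm m 0 = 1`; `sfm m n = sfm m (n / m)` if
`n > 0` and `m ∣ n`; and `sfm m n = sfm m (n - r) + sfm m (n - m)` if
`n ≡ r (mod m)` with `0 < r < m`, where terms with negative argument are `0`
(the value for `m ≤ 1` is junk). -/
def sfm (m : ℕ) : ℕ → ℕ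
  | 0 => 1
  | n + 1 =>
    if m ≤ 1 then 0
    else if (n + 1) % m = 0 then sfm m ((n + 1) / m)
    else sfm m ((n + 1) - (n + 1) % m) +
      if n + 1 < m then 0 else sfm m ((n + 1) - m)
  termination_by n => n
  decreasing_by
  · exact Nat.div_lt_self (Nat.succ_pos n) (by omega)
  · omega
  · omega

/-- `Pb n = true` iff all base-3 digits of `n` lie in `{0, 2}`. -/
def Pb (n : ℕ) : Bool :=
  if h : n = 0 then true
  else if n % 3 = 1 then false
  else Pb (n / 3)
  termination_by n
  decreasing_by exact Nat.div_lt_self (by omega) (by omega)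

lemma Pb_zero : Pb 0 = true := by rw [Pb]; simp

lemma Pb_mul3 (a : ℕ) : Pb (3 * a) = Pb a := by
  rcases eq_or_ne a 0 with rfl | ha
  · simp
  · rw [Pb]
    have h0 : ¬ (3 * a = 0) := by omega
    have h1 : ¬ ((3 * a) % 3 = 1) := by omega
    have h2 : (3 * a) / 3 = a := by omega
    simp [h0, h1, h2]

lemma Pb_r1 (a : ℕ) : Pb (3 * a + 1) = false := by
  rw [Pb]
  have h0 : ¬ (3 * a + 1 = 0) := by omega
  have h1 : (3 * a + 1) % 3 = 1 := by omega
  simp [h0, h1]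

lemma Pb_r2 (a : ℕ) : Pb (3 * a + 2) = Pb a := by
  rw [Pb]
  have h0 : ¬ (3 * a + 2 = 0) := by omega
  have h1 : ¬ ((3 * a + 2) % 3 = 1) := by omega
  have h2 : (3 * a + 2) / 3 = a := by omega
  simp [h0, h1, h2]

/-- No two consecutive numbers both have all base-3 digits in `{0,2}`. -/
lemma Pb_succ : ∀ a : ℕ, Pb a = true → Pb (a + 1) = false := by
  intro a
  induction a using Nat.strong_induction_on with
  | _ a ih =>
    intro ha
    rcases (show a = 3 * (a / 3) ∨ a = 3 * (a / 3) + 1 ∨ a = 3 * (a / 3) + 2 by omega) with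
      h | h | h
    · rw [h]; exact Pb_r1 _
    · rw [h] at ha; rw [Pb_r1] at ha; exact absurd ha (by simp)
    · rw [h] at ha ⊢
      rw [Pb_r2] at ha
      have : 3 * (a / 3) + 2 + 1 = 3 * (a / 3 + 1) := by omega
      rw [this, Pb_mul3]
      exact ih (a / 3) (by omega) ha

lemma sfm3_zero : sfm 3 0 = 1 := by simp [sfm]
lemma sfm3_one : sfm 3 1 = 1 := by simp [sfm]
lemma sfm3_two : sfm 3 2 = 1 := by simp [sfm]

lemma sfm3_mul3 (a : ℕ) (h : 0 < a) : sfm 3 (3 * a) = sfm 3 a := by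
  obtain ⟨m, hm⟩ : ∃ m, 3 * a = m + 1 := ⟨3 * a - 1, by omega⟩
  rw [hm, sfm]
  have h1 : (m + 1) % 3 = 0 := by omega
  have h2 : (m + 1) / 3 = a := by omega
  simp [h1, h2]

lemma sfm3_r1 (b : ℕ) : sfm 3 (3 * b + 4) = sfm 3 (3 * b + 3) + sfm 3 (3 * b + 1) := by
  have h : 3 * b + 4 = (3 * b + 3) + 1 := by omega
  rw [h, sfm]
  have h1 : (3 * b + 3 + 1) % 3 = 1 := by omega
  simp [h1]

lemma sfm3_r2 (b : ℕ) : sfm 3 (3 * b + 5) = sfm 3 (3 * b + 3) + sfm 3 (3 * b + 2) := by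
  have h : 3 * b + 5 = (3 * b + 4) + 1 := by omega
  rw [h, sfm]
  have h1 : (3 * b + 4 + 1) % 3 = 2 := by omega
  simp [h1]

lemma sfm3_mod : ∀ n : ℕ, sfm 3 n % 2 = cond (Pb n || Pb (n - 1)) 1 0 := by
  intro n
  induction n using Nat.strong_induction_on with
  | _ n ih =>
    rcases (show n = 0 ∨ n = 1 ∨ n = 2 ∨ (3 ≤ n) by omega) with rfl | rfl | rfl | h3
    · simp [sfm3_zero, Pb_zero]
    · simp [sfm3_one, Pb_zero]
    · simp [sfm3_two]
      have : (2 : ℕ) = 3 * 0 + 2 := by norm_num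
      rw [this, Pb_r2, Pb_zero]
      simp
    · have hcase : n = 3 * (n / 3) ∨ n = 3 * (n / 3) + 1 ∨ n = 3 * (n / 3) + 2 := by omega
      rcases hcase with h | h | h
      · -- n = 3a, a >= 1
        obtain ⟨a, ha1, hA⟩ : ∃ a, 1 ≤ a ∧ n = 3 * a := ⟨n / 3, by omega, by omega⟩
        rw [hA, sfm3_mul3 a (by omega), ih a (by omega), Pb_mul3,
          show 3 * a - 1 = 3 * (a - 1) + 2 from by omega, Pb_r2]
      · -- n = 3b + 4
        obtain ⟨b, hb⟩ : ∃ b, n = 3 * b + 4 := ⟨n / 3 - 1, by omega⟩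
        rw [hb, sfm3_r1, Nat.add_mod]
        have i1 : sfm 3 (3 * b + 3) % 2 = cond (Pb (b + 1) || Pb b) 1 0 := by
          rw [ih (3 * b + 3) (by omega),
            show 3 * b + 3 - 1 = 3 * b + 2 from by omega,
            show 3 * b + 3 = 3 * (b + 1) from by omega, Pb_mul3, Pb_r2]
        have i2 : sfm 3 (3 * b + 1) % 2 = cond (Pb b) 1 0 := by
          rw [ih (3 * b + 1) (by omega),
            show 3 * b + 1 - 1 = 3 * b from by omega, Pb_r1, Pb_mul3]
          simp
        rw [i1, i2, show 3 * b + 4 - 1 = 3 * (b + 1) from by omega,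
          show 3 * b + 4 = 3 * (b + 1) + 1 from by omega, Pb_r1, Pb_mul3]
        have hns := Pb_succ b
        clear ih h hb i1 i2
        cases hb0 : Pb b <;> cases hb1 : Pb (b + 1) <;> simp_all
      · -- n = 3b + 5
        obtain ⟨b, hb⟩ : ∃ b, n = 3 * b + 5 := ⟨n / 3 - 1, by omega⟩
        rw [hb, sfm3_r2, Nat.add_mod]
        have i1 : sfm 3 (3 * b + 3) % 2 = cond (Pb (b + 1) || Pb b) 1 0 := by
          rw [ih (3 * b + 3) (by omega),
            show 3 * b + 3 - 1 = 3 * b + 2 from by omega,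
            show 3 * b + 3 = 3 * (b + 1) from by omega, Pb_mul3, Pb_r2]
        have i2 : sfm 3 (3 * b + 2) % 2 = cond (Pb b) 1 0 := by
          rw [ih (3 * b + 2) (by omega),
            show 3 * b + 2 - 1 = 3 * b + 1 from by omega, Pb_r2, Pb_r1]
          simp
        rw [i1, i2, show 3 * b + 5 - 1 = 3 * (b + 1) + 1 from by omega,
          show 3 * b + 5 = 3 * (b + 1) + 2 from by omega, Pb_r2, Pb_r1]
        have hns := Pb_succ b
        clear ih h hb i1 i2
        cases hb0 : Pb b <;> cases hb1 : Pb (b + 1) <;> simp_all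

lemma sum_sfm3_mod (n : ℕ) :
    (∑ r ∈ Finset.range (n + 1), sfm 3 r) % 2 = cond (Pb n) 1 0 := by
  induction n with
  | zero => simp [sfm3_zero, Pb_zero]
  | succ n ih =>
    rw [Finset.sum_range_succ, Nat.add_mod, ih, sfm3_mod (n + 1)]
    simp only [Nat.add_sub_cancel]
    have hns := Pb_succ n
    cases hb : Pb n <;> cases hb1 : Pb (n + 1) <;> simp_all

lemma sum_image_succ (S : Finset ℕ) :
    ∑ k ∈ S.image (· + 1), 2 * 3 ^ k = 3 * ∑ k ∈ S, 2 * 3 ^ k := by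
  rw [Finset.sum_image (by intro x _ y _ h; simp only at h; omega), Finset.mul_sum]
  refine Finset.sum_congr rfl fun k _ => ?_
  ring

lemma Pb_iff : ∀ n : ℕ, Pb n = true ↔ ∃ S : Finset ℕ, n = ∑ k ∈ S, 2 * 3 ^ k := by
  intro n
  induction n using Nat.strong_induction_on with
  | _ n ih =>
    rcases eq_or_ne n 0 with rfl | hn
    · simp only [Pb_zero, true_iff]
      exact ⟨∅, by simp⟩
    constructor
    · intro h
      set a := n / 3 with ha
      rcases (show n = 3 * a ∨ n = 3 * a + 1 ∨ n = 3 * a + 2 by omega) with hr | hr | hr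
      · rw [hr, Pb_mul3] at h
        obtain ⟨S, hS⟩ := (ih a (by omega)).1 h
        refine ⟨S.image (· + 1), ?_⟩
        rw [sum_image_succ, ← hS, hr]
      · rw [hr, Pb_r1] at h; exact absurd h (by simp)
      · rw [hr, Pb_r2] at h
        obtain ⟨S, hS⟩ := (ih a (by omega)).1 h
        refine ⟨insert 0 (S.image (· + 1)), ?_⟩
        rw [Finset.sum_insert (by simp), sum_image_succ, ← hS, hr]
        ring
    · rintro ⟨S, rfl⟩
      by_cases h0 : 0 ∈ S
      · have hsplit : ∑ k ∈ S, 2 * 3 ^ k = 2 * 3 ^ 0 + ∑ k ∈ S.erase 0, 2 * 3 ^ k :=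
          (Finset.add_sum_erase S (fun k => 2 * 3 ^ k) h0).symm
        have hT0 : ∀ k ∈ S.erase 0, k ≠ 0 := fun k hk => Finset.ne_of_mem_erase hk
        have hinj : ∀ x ∈ S.erase 0, ∀ y ∈ S.erase 0, x - 1 = y - 1 → x = y := by
          intro x hx y hy h
          have := hT0 x hx; have := hT0 y hy; omega
        have hshift : ∑ k ∈ S.erase 0, 2 * 3 ^ k
            = 3 * ∑ k ∈ (S.erase 0).image (· - 1), 2 * 3 ^ k := by
          rw [Finset.sum_image hinj, Finset.mul_sum]
          refine Finset.sum_congr rfl fun k hk => ?_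
          have hk0 := hT0 k hk
          have h3 : (3 : ℕ) ^ k = 3 * 3 ^ (k - 1) := by
            conv_lhs => rw [show k = (k - 1) + 1 from by omega]
            ring
          rw [h3]; ring
        have hP : Pb (∑ k ∈ (S.erase 0).image (· - 1), 2 * 3 ^ k) = true :=
          (ih _ (by omega)).2 ⟨(S.erase 0).image (· - 1), rfl⟩
        rw [hsplit, hshift,
          show 2 * 3 ^ 0 + 3 * ∑ k ∈ (S.erase 0).image (· - 1), 2 * 3 ^ k
            = 3 * (∑ k ∈ (S.erase 0).image (· - 1), 2 * 3 ^ k) + 2 from by omega,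
          Pb_r2]
        exact hP
      · have hT0 : ∀ k ∈ S, k ≠ 0 := fun k hk h => h0 (h ▸ hk)
        have hinj : ∀ x ∈ S, ∀ y ∈ S, x - 1 = y - 1 → x = y := by
          intro x hx y hy h
          have := hT0 x hx; have := hT0 y hy; omega
        have hshift : ∑ k ∈ S, 2 * 3 ^ k
            = 3 * ∑ k ∈ S.image (· - 1), 2 * 3 ^ k := by
          rw [Finset.sum_image hinj, Finset.mul_sum]
          refine Finset.sum_congr rfl fun k hk => ?_
          have hk0 := hT0 k hk
          have h3 : (3 : ℕ) ^ k = 3 * 3 ^ (k - 1) := by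
            conv_lhs => rw [show k = (k - 1) + 1 from by omega]
            ring
          rw [h3]; ring
        have hP : Pb (∑ k ∈ S.image (· - 1), 2 * 3 ^ k) = true :=
          (ih _ (by omega)).2 ⟨S.image (· - 1), rfl⟩
        rw [hshift, Pb_mul3]
        exact hP

/-- Σ_{r=0}^{n} sf(r,3) is odd if and only if `n` is a sum of distinct
integers of the form `2 * 3 ^ k` (equivalently, as formal power series over
ℤ/2ℤ, `Σ_{n≥0} (Σ_{r=0}^{n} sf(r,3)) q^n = Π_{n≥0} (1 + q^{2·3^n})`). -/
theorem sfm_three_partial_sum_odd_iff (n : ℕ) :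
    Odd (∑ r ∈ Finset.range (n + 1), sfm 3 r) ↔
      ∃ S : Finset ℕ, n = ∑ k ∈ S, 2 * 3 ^ k := by
  rw [Nat.odd_iff, sum_sfm3_mod, ← Pb_iff]
  cases h : Pb n <;> simp
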